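/- For any even a, b ≥ 2, the ordered Ramsey number of nested matchings satisfies R_ord(M_a^nest, M_b^nest) = a + b − 2. -/

import Mathlib

open SimpleGraph Finset

/-- A symmetric `k`-edge-coloring `χ` of the complete graph on `Fin n` contains a copy of `H`
in color `j` via a strictly increasing embedding. -/
def ContainsOrd {m n k : ℕ} (H : SimpleGraph (Fin m))
    (χ : Fin n → Fin n → Fin k) (j : Fin k) : Prop :=
  ∃ φ : Fin m → Fin n, StrictMono φ ∧ ∀ u v : Fin m, H.Adj u v → χ (φ u) (φ v) = j

/-- Contains a copy via an embedding that is increasing up to a cyclic permutation. -/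
def ContainsCyc {m n k : ℕ} (H : SimpleGraph (Fin m))
    (χ : Fin n → Fin n → Fin k) (j : Fin k) : Prop :=
  ∃ φ : Fin m → Fin n, (∃ t : Fin m, StrictMono fun i : Fin m => φ (i + t)) ∧
    ∀ u v : Fin m, H.Adj u v → χ (φ u) (φ v) = j

/-- Contains a copy via an arbitrary injective embedding. -/
def ContainsStd {m n k : ℕ} (H : SimpleGraph (Fin m))
    (χ : Fin n → Fin n → Fin k) (j : Fin k) : Prop :=
  ∃ φ : Fin m → Fin n, Function.Injective φ ∧ ∀ u v : Fin m, H.Adj u v → χ (φ u) (φ v) = j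

/-- The ordered Ramsey number of a family of graphs. -/
noncomputable def Rord {k : ℕ} (m : Fin k → ℕ) (H : ∀ j, SimpleGraph (Fin (m j))) : ℕ :=
  sInf {n | ∀ χ : Fin n → Fin n → Fin k, (∀ u v, χ u v = χ v u) → ∃ j, ContainsOrd (H j) χ j}

/-- The cyclic Ramsey number of a family of graphs. -/
noncomputable def Rcyc {k : ℕ} (m : Fin k → ℕ) (H : ∀ j, SimpleGraph (Fin (m j))) : ℕ :=
  sInf {n | ∀ χ : Fin n → Fin n → Fin k, (∀ u v, χ u v = χ v u) → ∃ j, ContainsCyc (H j) χ j}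

/-- The standard Ramsey number of a family of graphs. -/
noncomputable def Rstd {k : ℕ} (m : Fin k → ℕ) (H : ∀ j, SimpleGraph (Fin (m j))) : ℕ :=
  sInf {n | ∀ χ : Fin n → Fin n → Fin k, (∀ u v, χ u v = χ v u) → ∃ j, ContainsStd (H j) χ j}

/-- The two-color ordered Ramsey number. -/
noncomputable def Rord2 {a b : ℕ} (H₁ : SimpleGraph (Fin a)) (H₂ : SimpleGraph (Fin b)) : ℕ :=
  sInf {n | ∀ χ : Fin n → Fin n → Fin 2, (∀ u v, χ u v = χ v u) →
    ContainsOrd H₁ χ 0 ∨ ContainsOrd H₂ χ 1}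

/-- The two-color cyclic Ramsey number. -/
noncomputable def Rcyc2 {a b : ℕ} (H₁ : SimpleGraph (Fin a)) (H₂ : SimpleGraph (Fin b)) : ℕ :=
  sInf {n | ∀ χ : Fin n → Fin n → Fin 2, (∀ u v, χ u v = χ v u) →
    ContainsCyc H₁ χ 0 ∨ ContainsCyc H₂ χ 1}

/-- The monotone path of order `n`. -/
def monPath (n : ℕ) : SimpleGraph (Fin n) :=
  SimpleGraph.fromRel fun u v => (u : ℕ) + 1 = (v : ℕ)

/-- The monotone cycle of order `n`. -/
def monCycle (n : ℕ) : SimpleGraph (Fin n) :=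
  SimpleGraph.fromRel fun u v => (u : ℕ) + 1 = (v : ℕ) ∨ ((u : ℕ) = 0 ∧ (v : ℕ) = n - 1)

/-- The start-central star of order `n` (center `0`). -/
def starSC (n : ℕ) : SimpleGraph (Fin n) :=
  SimpleGraph.fromRel fun u _ => (u : ℕ) = 0

/-- The star of order `n` with center `c`. -/
def starG (n : ℕ) (c : Fin n) : SimpleGraph (Fin n) :=
  SimpleGraph.fromRel fun u _ => u = c

/-- The nested matching of order `n`. -/
def nestedMatching (n : ℕ) : SimpleGraph (Fin n) :=
  SimpleGraph.fromRel fun u v => (u : ℕ) + (v : ℕ) = n - 1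

/-- Rotational isomorphism of two graphs on `Fin m`. -/
def RotIso {m : ℕ} (G₁ G₂ : SimpleGraph (Fin m)) : Prop :=
  ∃ s : Fin m, ∀ u v : Fin m, G₁.Adj u v ↔ G₂.Adj (u + s) (v + s)

lemma spread14 {m n : ℕ} {φ : Fin m → Fin n} (h : StrictMono φ) {i j : Fin m}
    (hij : (i : ℕ) ≤ (j : ℕ)) : (φ i : ℕ) + ((j : ℕ) - (i : ℕ)) ≤ (φ j : ℕ) := by
  obtain ⟨k, hk⟩ : ∃ k, (j : ℕ) = (i : ℕ) + k := ⟨(j : ℕ) - (i : ℕ), by omega⟩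
  induction k generalizing j with
  | zero =>
      have : i = j := Fin.ext (by omega)
      subst this; omega
  | succ k ih =>
      have hjm := j.isLt
      have hj1 : (i : ℕ) + k < m := by omega
      have h1 := ih (j := ⟨(i : ℕ) + k, hj1⟩) (by simp) (by simp)
      have h2 : φ ⟨(i : ℕ) + k, hj1⟩ < φ j := h (by rw [Fin.lt_def]; simp; omega)
      rw [Fin.lt_def] at h2
      have hmk : ((⟨(i : ℕ) + k, hj1⟩ : Fin m) : ℕ) = (i : ℕ) + k := rfl
      omega

lemma sm_lb14 {m n : ℕ} {φ : Fin m → Fin n} (h : StrictMono φ) (i : Fin m) :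
    (i : ℕ) ≤ (φ i : ℕ) := by
  have h1 := spread14 h (i := ⟨0, i.pos⟩) (j := i) (Nat.zero_le _)
  have hmk : ((⟨0, i.pos⟩ : Fin m) : ℕ) = 0 := rfl
  omega

lemma sm_ub14 {m n : ℕ} {φ : Fin m → Fin n} (h : StrictMono φ) (i : Fin m) :
    (φ i : ℕ) + (m - 1 - (i : ℕ)) ≤ n - 1 := by
  have him := i.isLt
  have h1 := spread14 h (i := i) (j := ⟨m - 1, by omega⟩) (show (i : ℕ) ≤ m - 1 by omega)
  have h2 := (φ ⟨m - 1, by omega⟩).isLt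
  have hmk : ((⟨m - 1, by omega⟩ : Fin m) : ℕ) = m - 1 := rfl
  omega

lemma build14 {n : ℕ} (hne : n % 2 = 0) (χ : Fin n → Fin n → Fin 2)
    (hsym : ∀ u v, χ u v = χ v u) (c : Fin 2) (m : ℕ) (hm2 : 2 ≤ m) (hme : m % 2 = 0)
    (T : Finset (Fin n)) (hT : ∀ j ∈ T, 2 * (j : ℕ) < n ∧ χ j j.rev = c)
    (hcard : m / 2 ≤ T.card) :
    ContainsOrd (nestedMatching m) χ c := by
  classical
  obtain ⟨T', hsub, hc⟩ := Finset.exists_subset_card_eq hcard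
  let e := T'.orderIsoOfFin hc
  let E : Fin (m / 2) → Fin n := fun x => (e x : Fin n)
  have hElt : ∀ x, 2 * (E x : ℕ) < n := fun x => (hT _ (hsub (e x).2)).1
  have hEcol : ∀ x, χ (E x) (E x).rev = c := fun x => (hT _ (hsub (e x).2)).2
  have hEmono : ∀ x y : Fin (m / 2), (x : ℕ) < (y : ℕ) → (E x : ℕ) < (E y : ℕ) := by
    intro x y hxy
    have h1 : e x < e y := e.strictMono (show x < y from hxy)
    exact Fin.lt_def.mp (Subtype.coe_lt_coe.mpr h1)
  have hrevval : ∀ j : Fin n, (Fin.rev j : ℕ) = n - 1 - (j : ℕ) := by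
    intro j
    rw [Fin.val_rev]
    omega
  refine ⟨fun i => if h : (i : ℕ) < m / 2 then E ⟨i, h⟩
    else (E ⟨m - 1 - (i : ℕ), by have := i.isLt; omega⟩).rev, ?_, ?_⟩
  · intro i j hij
    dsimp only
    rw [Fin.lt_def] at hij ⊢
    have him := i.isLt
    have hjm := j.isLt
    by_cases hi : (i : ℕ) < m / 2 <;> by_cases hj : (j : ℕ) < m / 2
    · rw [dif_pos hi, dif_pos hj]
      exact hEmono _ _ (by simpa using hij)
    · rw [dif_pos hi, dif_neg hj, hrevval]
      have h1 := hElt ⟨i, hi⟩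
      have h2 := hElt ⟨m - 1 - (j : ℕ), by omega⟩
      omega
    · omega
    · rw [dif_neg hi, dif_neg hj, hrevval, hrevval]
      have h1 := hEmono ⟨m - 1 - (j : ℕ), by omega⟩ ⟨m - 1 - (i : ℕ), by omega⟩ (by simp; omega)
      have h2 := hElt ⟨m - 1 - (i : ℕ), by omega⟩
      omega
  · intro u v hadj
    rw [nestedMatching, SimpleGraph.fromRel_adj] at hadj
    obtain ⟨hne', hsum⟩ := hadj
    dsimp only
    have hsum' : (u : ℕ) + (v : ℕ) = m - 1 := by omega
    have hneval : (u : ℕ) ≠ (v : ℕ) := fun h => hne' (Fin.ext h)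
    have hum := u.isLt
    have hvm := v.isLt
    by_cases hu : (u : ℕ) < m / 2
    · have hv : ¬ (v : ℕ) < m / 2 := by omega
      rw [dif_pos hu, dif_neg hv]
      have hidx : (⟨m - 1 - (v : ℕ), by omega⟩ : Fin (m / 2)) = ⟨(u : ℕ), hu⟩ :=
        Fin.ext (by simp; omega)
      rw [hidx]
      exact hEcol _
    · have hv : (v : ℕ) < m / 2 := by omega
      rw [dif_neg hu, dif_pos hv]
      have hidx : (⟨m - 1 - (u : ℕ), by omega⟩ : Fin (m / 2)) = ⟨(v : ℕ), hv⟩ :=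
        Fin.ext (by simp; omega)
      rw [hidx, hsym]
      exact hEcol _

lemma mem_S14 (a b : ℕ) (ha : 2 ≤ a) (hb : 2 ≤ b) (hea : a % 2 = 0) (heb : b % 2 = 0)
    (χ : Fin (a + b - 2) → Fin (a + b - 2) → Fin 2) (hsym : ∀ u v, χ u v = χ v u) :
    ContainsOrd (nestedMatching a) χ 0 ∨ ContainsOrd (nestedMatching b) χ 1 := by
  classical
  have hn2 : (a + b - 2) % 2 = 0 := by omega
  let inc : Fin ((a + b - 2) / 2) → Fin (a + b - 2) :=
    fun j => ⟨(j : ℕ), by have := j.isLt; omega⟩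
  have hincinj : Function.Injective inc := by
    intro x y h
    have h2 := congrArg Fin.val h
    exact Fin.ext h2
  let p : Fin ((a + b - 2) / 2) → Prop := fun j => χ (inc j) (inc j).rev = 0
  have hsplit : ((Finset.univ.filter p).card + (Finset.univ.filter fun x => ¬ p x).card)
      = (a + b - 2) / 2 := by
    rw [Finset.card_filter_add_card_filter_not]
    simp
  by_cases hA : a / 2 ≤ (Finset.univ.filter p).card
  · left
    refine build14 hn2 χ hsym 0 a ha hea ((Finset.univ.filter p).image inc) ?_ ?_
    · intro j hj
      obtain ⟨x, hx, rfl⟩ := Finset.mem_image.mp hj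
      have hxp : p x := (Finset.mem_filter.mp hx).2
      have hxlt := x.isLt
      exact ⟨by simp only [inc]; omega, hxp⟩
    · rw [Finset.card_image_of_injective _ hincinj]; exact hA
  · right
    refine build14 hn2 χ hsym 1 b hb heb ((Finset.univ.filter fun x => ¬ p x).image inc) ?_ ?_
    · intro j hj
      obtain ⟨x, hx, rfl⟩ := Finset.mem_image.mp hj
      have hxp : ¬ p x := (Finset.mem_filter.mp hx).2
      have hxlt := x.isLt
      refine ⟨by simp only [inc]; omega, ?_⟩
      have h2 := (χ (inc x) (inc x).rev).isLt
      have h0 : (χ (inc x) (inc x).rev : ℕ) ≠ 0 := by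
        intro h; exact hxp (Fin.ext h)
      exact Fin.ext (by omega)
    · rw [Finset.card_image_of_injective _ hincinj]
      omega

lemma lower14 (a b m : ℕ) (ha : 2 ≤ a) (hb : 2 ≤ b) (hea : a % 2 = 0) (heb : b % 2 = 0)
    (hm : m ≤ a + b - 3) :
    ∃ χ : Fin m → Fin m → Fin 2, (∀ u v, χ u v = χ v u) ∧
      ¬ ContainsOrd (nestedMatching a) χ 0 ∧ ¬ ContainsOrd (nestedMatching b) χ 1 := by
  classical
  refine ⟨fun u v => if (a / 2 - 1 ≤ (u : ℕ) ∧ (u : ℕ) + a / 2 ≤ a + b - 3) ∧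
      (a / 2 - 1 ≤ (v : ℕ) ∧ (v : ℕ) + a / 2 ≤ a + b - 3) then 1 else 0, ?_, ?_, ?_⟩
  · intro u v
    exact if_congr and_comm rfl rfl
  · rintro ⟨φ, hmono, hedge⟩
    have hu : a / 2 - 1 < a := by omega
    have hv : a / 2 < a := by omega
    let u : Fin a := ⟨a / 2 - 1, hu⟩
    let v : Fin a := ⟨a / 2, hv⟩
    have hu1 : (u : ℕ) = a / 2 - 1 := rfl
    have hv1 : (v : ℕ) = a / 2 := rfl
    have hadj : (nestedMatching a).Adj u v := by
      rw [nestedMatching, SimpleGraph.fromRel_adj]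
      refine ⟨fun hEq => ?_, Or.inl (by omega)⟩
      have h5 := congrArg Fin.val hEq
      omega
    have he := hedge u v hadj
    dsimp only at he
    have h1 := sm_lb14 hmono u
    have h2 := sm_lb14 hmono v
    have h3 := sm_ub14 hmono v
    have h4 : φ u < φ v := hmono (show u < v by rw [Fin.lt_def]; omega)
    rw [Fin.lt_def] at h4
    have hcond : (a / 2 - 1 ≤ (φ u : ℕ) ∧ (φ u : ℕ) + a / 2 ≤ a + b - 3) ∧
        (a / 2 - 1 ≤ (φ v : ℕ) ∧ (φ v : ℕ) + a / 2 ≤ a + b - 3) := by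
      refine ⟨⟨by omega, by omega⟩, ⟨by omega, by omega⟩⟩
    rw [if_pos hcond] at he
    exact absurd he (by decide)
  · rintro ⟨φ, hmono, hedge⟩
    have hu : 0 < b := by omega
    have hv : b - 1 < b := by omega
    let u : Fin b := ⟨0, hu⟩
    let v : Fin b := ⟨b - 1, hv⟩
    have hu1 : (u : ℕ) = 0 := rfl
    have hv1 : (v : ℕ) = b - 1 := rfl
    have hadj : (nestedMatching b).Adj u v := by
      rw [nestedMatching, SimpleGraph.fromRel_adj]
      refine ⟨fun hEq => ?_, Or.inl (by omega)⟩
      have h5 := congrArg Fin.val hEq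
      omega
    have he := hedge u v hadj
    dsimp only at he
    have hsp := spread14 hmono (i := u) (j := v) (by omega)
    by_cases hcond : (a / 2 - 1 ≤ (φ u : ℕ) ∧ (φ u : ℕ) + a / 2 ≤ a + b - 3) ∧
        (a / 2 - 1 ≤ (φ v : ℕ) ∧ (φ v : ℕ) + a / 2 ≤ a + b - 3)
    · obtain ⟨⟨hc1, _⟩, ⟨_, hc4⟩⟩ := hcond
      omega
    · rw [if_neg hcond] at he
      exact absurd he (by decide)

theorem stmt14 (a b : ℕ) (ha : 2 ≤ a) (hb : 2 ≤ b) (hea : Even a) (heb : Even b) :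
    Rord2 (nestedMatching a) (nestedMatching b) = a + b - 2 := by
  have hea' : a % 2 = 0 := Nat.even_iff.mp hea
  have heb' : b % 2 = 0 := Nat.even_iff.mp heb
  have hmem : (a + b - 2) ∈ {n | ∀ χ : Fin n → Fin n → Fin 2, (∀ u v, χ u v = χ v u) →
      ContainsOrd (nestedMatching a) χ 0 ∨ ContainsOrd (nestedMatching b) χ 1} :=
    fun χ hsym => mem_S14 a b ha hb hea' heb' χ hsym
  unfold Rord2
  refine le_antisymm (Nat.sInf_le hmem) (le_csInf ⟨_, hmem⟩ ?_)
  intro m hmS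
  by_contra hlt
  push_neg at hlt
  obtain ⟨χ, hsym, h0, h1⟩ := lower14 a b m ha hb hea' heb' (by omega)
  rcases hmS χ hsym with h | h
  · exact h0 h
  · exact h1 h
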